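/- For every p ∈ (0,1) and all finite tuples of positive reals, G_{p,p}(a₁,…,aₙ) ≥ G_{p,p/2}(a₁,…,aₙ). -/

import Mathlib

open Finset in
/-- The Gini mean `G_{p,q}` of a tuple of positive reals. -/
noncomputable def gini (p q : ℝ) (n : ℕ) (a : Fin n → ℝ) : ℝ :=
  if p = q then
    Real.exp ((∑ i, a i ^ p * Real.log (a i)) / (∑ i, a i ^ p))
  else
    ((∑ i, a i ^ p) / (∑ i, a i ^ q)) ^ (1 / (p - q))

theorem stmt_8 (p : ℝ) (hp : p ∈ Set.Ioo (0:ℝ) 1)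
    (n : ℕ) (a : Fin (n + 1) → ℝ) (ha : ∀ i, 0 < a i) :
    gini p (p / 2) (n + 1) a ≤ gini p p (n + 1) a := by
  obtain ⟨hp0, hp1⟩ := hp
  have hpne : p ≠ p / 2 := by intro h; linarith
  have hS : 0 < ∑ i, a i ^ p :=
    Finset.sum_pos (fun i _ => Real.rpow_pos_of_pos (ha i) p) ⟨0, Finset.mem_univ 0⟩
  have hT : 0 < ∑ i, a i ^ (p / 2) :=
    Finset.sum_pos (fun i _ => Real.rpow_pos_of_pos (ha i) _) ⟨0, Finset.mem_univ 0⟩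
  set S := ∑ i, a i ^ p with hSdef
  set T := ∑ i, a i ^ (p / 2) with hTdef
  set L := ∑ i, a i ^ p * Real.log (a i) with hLdef
  have hST : 0 < S / T := div_pos hS hT
  rw [gini, gini, if_neg hpne, if_pos rfl]
  have key : ∑ i, a i ^ p * (Real.log (a i ^ (-(p / 2))) + Real.log (S / T)) ≤ 0 := by
    have h1 : ∀ i : Fin (n + 1),
        a i ^ p * (Real.log (a i ^ (-(p / 2))) + Real.log (S / T))
          ≤ a i ^ p * (a i ^ (-(p / 2)) * (S / T) - 1) := by
      intro i
      apply mul_le_mul_of_nonneg_left _ (le_of_lt (Real.rpow_pos_of_pos (ha i) p))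
      rw [← Real.log_mul (ne_of_gt (Real.rpow_pos_of_pos (ha i) _)) (ne_of_gt hST)]
      exact Real.log_le_sub_one_of_pos (mul_pos (Real.rpow_pos_of_pos (ha i) _) hST)
    calc ∑ i, a i ^ p * (Real.log (a i ^ (-(p / 2))) + Real.log (S / T))
        ≤ ∑ i, a i ^ p * (a i ^ (-(p / 2)) * (S / T) - 1) :=
          Finset.sum_le_sum (fun i _ => h1 i)
      _ = ∑ i, (a i ^ (p / 2) * (S / T) - a i ^ p) := by
          apply Finset.sum_congr rfl
          intro i _
          have h2 : a i ^ p * a i ^ (-(p / 2)) = a i ^ (p / 2) := by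
            rw [← Real.rpow_add (ha i), show p + -(p / 2) = p / 2 by ring]
          calc a i ^ p * (a i ^ (-(p / 2)) * (S / T) - 1)
              = (a i ^ p * a i ^ (-(p / 2))) * (S / T) - a i ^ p := by ring
            _ = a i ^ (p / 2) * (S / T) - a i ^ p := by rw [h2]
      _ = T * (S / T) - S := by
          rw [Finset.sum_sub_distrib, ← Finset.sum_mul]
      _ = 0 := by field_simp; ring
  have key2 : -(p / 2) * L + S * Real.log (S / T) ≤ 0 := by
    have h3 : ∑ i, a i ^ p * (Real.log (a i ^ (-(p / 2))) + Real.log (S / T))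
        = -(p / 2) * L + S * Real.log (S / T) := by
      have h4 : ∀ i : Fin (n + 1),
          a i ^ p * (Real.log (a i ^ (-(p / 2))) + Real.log (S / T))
            = -(p / 2) * (a i ^ p * Real.log (a i)) + a i ^ p * Real.log (S / T) := by
        intro i
        rw [Real.log_rpow (ha i)]
        ring
      rw [Finset.sum_congr rfl (fun i _ => h4 i), Finset.sum_add_distrib,
        ← Finset.mul_sum, ← Finset.sum_mul]
    linarith [key, h3 ▸ key]
  have hexp : Real.log (S / T) * (1 / (p - p / 2)) ≤ L / S := by
    have hp2 : 0 < p - p / 2 := by linarith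
    rw [mul_one_div, div_le_div_iff₀ hp2 hS]
    nlinarith [key2]
  calc (S / T) ^ (1 / (p - p / 2))
      = Real.exp (Real.log (S / T) * (1 / (p - p / 2))) :=
        Real.rpow_def_of_pos hST _
    _ ≤ Real.exp (L / S) := Real.exp_le_exp.mpr hexp
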